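/- arXiv:0902.3445 — 2 statements merged into one kernel-verified Lean document; each statement's English description precedes it below -/
import Mathlib

section
/- Let Z : B(H) → B(H) be defined by Z(X) = Σ_{j=1}^d A_j* X A_j where Σ_j A_j* A_j = 1, and suppose the vector state of a unit vector Ω ∈ H is Z-invariant: ⟨Ω, Z(X) Ω⟩ = ⟨Ω, X Ω⟩ for all X. Let p be the orthogonal projection onto ℂΩ. Then the sequence (Zⁿ(p))_{n≥0} is monotonically increasing in the Loewner order and bounded above by 1; in particular p ≤ Z(p). -/
set_option maxHeartbeats 1000000
set_option synthInstance.maxHeartbeats 200000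

open ContinuousLinearMap in
/-- A positive operator vanishes on a vector on which its quadratic form vanishes. -/
lemma aux_apply_eq_zero_of_inner_eq_zero {H : Type*}
    [NormedAddCommGroup H] [InnerProductSpace ℂ H] [CompleteSpace H]
    {T : H →L[ℂ] H} (hT : T.IsPositive) {x : H}
    (hx : @inner ℂ _ _ x (T x) = 0) : T x = 0 := by
  have hT' : (0 : H →L[ℂ] H) ≤ T := (nonneg_iff_isPositive T).2 hT
  set s : H →L[ℂ] H := CFC.sqrt T with hs
  have hs0 : (0 : H →L[ℂ] H) ≤ s := CFC.sqrt_nonneg T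
  have hss : s * s = T := CFC.sqrt_mul_sqrt_self T hT'
  have hsa : ContinuousLinearMap.adjoint s = s := by
    rw [← ContinuousLinearMap.star_eq_adjoint]
    exact IsSelfAdjoint.of_nonneg hs0
  have h1 : @inner ℂ _ _ x (T x) = @inner ℂ _ _ (s x) (s x) := by
    conv_lhs => rw [← hss]
    rw [ContinuousLinearMap.mul_apply, ← ContinuousLinearMap.adjoint_inner_left, hsa]
  have h2 : s x = 0 := by
    rw [h1] at hx
    exact inner_self_eq_zero.mp hx
  rw [← hss, ContinuousLinearMap.mul_apply, h2, map_zero]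

/-- If `Z(X) = Σ_j A_j* X A_j` is unital and the vector state of the unit vector `Ω` is
`Z`-invariant, then with `p` the rank-one projection onto `ℂΩ` the sequence `Zⁿ(p)` is
increasing in the Loewner order and bounded above by `1`; in particular `p ≤ Z(p)`
(the case `n = 0`). -/
theorem iterates_of_projection_monotone {H : Type*}
    [NormedAddCommGroup H] [InnerProductSpace ℂ H] [CompleteSpace H]
    (d : ℕ) (A : Fin d → H →L[ℂ] H)
    (Z : (H →L[ℂ] H) → (H →L[ℂ] H))
    (hZ : ∀ X, Z X = ∑ j, ContinuousLinearMap.adjoint (A j) ∘L X ∘L A j)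
    (hunital : ∑ j, ContinuousLinearMap.adjoint (A j) ∘L A j = 1)
    (Ω : H) (hΩ : ‖Ω‖ = 1)
    (hinv : ∀ X : H →L[ℂ] H, @inner ℂ _ _ Ω (Z X Ω) = @inner ℂ _ _ Ω (X Ω))
    (p : H →L[ℂ] H) (hp : ∀ ξ : H, p ξ = (@inner ℂ _ _ Ω ξ) • Ω) :
    ∀ n : ℕ, (Z^[n + 1] p - Z^[n] p).IsPositive ∧ (1 - Z^[n] p).IsPositive := by
  have hΩΩ : (@inner ℂ _ _ Ω Ω) = 1 := by
    rw [inner_self_eq_norm_sq_to_K, hΩ]; norm_num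
  -- Z is linear on differences and preserves positivity and unitality
  have hZsub : ∀ X Y : H →L[ℂ] H, Z X - Z Y = Z (X - Y) := by
    intro X Y
    rw [hZ, hZ, hZ, ← Finset.sum_sub_distrib]
    exact Finset.sum_congr rfl fun j _ => by
      simp [ContinuousLinearMap.comp_sub, ContinuousLinearMap.sub_comp]
  have hZ1 : Z 1 = 1 := by
    have : Z 1 = ∑ j, ContinuousLinearMap.adjoint (A j) ∘L A j := by
      rw [hZ]
      exact Finset.sum_congr rfl fun j _ => by
        rw [ContinuousLinearMap.one_def, ContinuousLinearMap.id_comp]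
    rw [this, hunital]
  have hZpos : ∀ T : H →L[ℂ] H, T.IsPositive → (Z T).IsPositive := by
    intro T hT
    rw [hZ]
    exact Finset.sum_induction _ ContinuousLinearMap.IsPositive
      (fun a b ha hb => ha.add hb) ContinuousLinearMap.isPositive_zero
      (fun j _ => hT.adjoint_conj (A j))
  -- p is a positive contraction
  have hpsymm : (p : H →ₗ[ℂ] H).IsSymmetric := by
    intro x y
    simp only [ContinuousLinearMap.coe_coe, hp, inner_smul_left, inner_smul_right,
      inner_conj_symm]
    ring
  have hpsa : IsSelfAdjoint p := ContinuousLinearMap.isSelfAdjoint_iff_isSymmetric.mpr hpsymm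
  have hppos : p.IsPositive := by
    refine ContinuousLinearMap.isPositive_def'.mpr ⟨hpsa, fun x => ?_⟩
    have : p.reApplyInnerSelf x = ‖(@inner ℂ _ _ Ω x)‖ ^ 2 := by
      rw [ContinuousLinearMap.reApplyInnerSelf, hp, inner_smul_left, RCLike.conj_mul]
      simp [sq]
    rw [this]; positivity
  have h1p : (1 - p).IsPositive := by
    refine ContinuousLinearMap.isPositive_def'.mpr ⟨(IsSelfAdjoint.one _).sub hpsa, fun x => ?_⟩
    have h1 : (1 - p).reApplyInnerSelf x = ‖x‖ ^ 2 - ‖(@inner ℂ _ _ Ω x)‖ ^ 2 := by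
      rw [ContinuousLinearMap.reApplyInnerSelf, ContinuousLinearMap.sub_apply,
        inner_sub_left, map_sub, hp, inner_smul_left, RCLike.conj_mul,
        ContinuousLinearMap.one_apply, ← inner_self_eq_norm_sq (𝕜 := ℂ)]
      simp [sq]
    have hle : ‖(@inner ℂ _ _ Ω x)‖ ≤ ‖x‖ := by
      calc ‖(@inner ℂ _ _ Ω x)‖ ≤ ‖Ω‖ * ‖x‖ := norm_inner_le_norm Ω x
        _ = ‖x‖ := by rw [hΩ, one_mul]
    rw [h1, sub_nonneg]
    exact pow_le_pow_left₀ (norm_nonneg _) hle 2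
  -- Zp fixes Ω
  have hZppos : (Z p).IsPositive := hZpos p hppos
  have h1Zp : (1 - Z p).IsPositive := by
    rw [← hZ1, hZsub]; exact hZpos _ h1p
  have hpΩ : p Ω = Ω := by rw [hp, hΩΩ, one_smul]
  have hfix : Z p Ω = Ω := by
    have h0 : @inner ℂ _ _ Ω ((1 - Z p) Ω) = 0 := by
      rw [ContinuousLinearMap.sub_apply, inner_sub_right, hinv, hpΩ,
        ContinuousLinearMap.one_apply, sub_self]
    have := aux_apply_eq_zero_of_inner_eq_zero h1Zp h0
    rw [ContinuousLinearMap.sub_apply, ContinuousLinearMap.one_apply, sub_eq_zero] at this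
    exact this.symm
  -- key step: p ≤ Z p
  have hZpsymm : ((Z p : H →L[ℂ] H) : H →ₗ[ℂ] H).IsSymmetric :=
    ContinuousLinearMap.isSelfAdjoint_iff_isSymmetric.mp hZppos.isSelfAdjoint
  have hbase : (Z p - p).IsPositive := by
    refine ContinuousLinearMap.isPositive_def'.mpr ⟨hZppos.isSelfAdjoint.sub hpsa, fun x => ?_⟩
    set c : ℂ := @inner ℂ _ _ Ω x with hc
    set η : H := x - c • Ω with hη
    have hkey : @inner ℂ _ _ ((Z p - p) x) x = @inner ℂ _ _ (Z p η) η := by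
      have hZpx : @inner ℂ _ _ (Z p x) Ω = starRingEnd ℂ c := by
        rw [show @inner ℂ _ _ (Z p x) Ω = @inner ℂ _ _ x (Z p Ω) from hZpsymm x Ω, hfix,
          ← inner_conj_symm, hc]
      have hΩx : @inner ℂ _ _ Ω x = c := hc.symm
      rw [hη, map_sub, map_smul, hfix, inner_sub_left, inner_sub_right, inner_sub_right,
        inner_smul_left, inner_smul_left, inner_smul_right, inner_smul_right, hZpx, hΩx, hΩΩ,
        ContinuousLinearMap.sub_apply, inner_sub_left, hp, inner_smul_left, hΩx]
      ring
    rw [ContinuousLinearMap.reApplyInnerSelf, hkey]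
    exact hZppos.re_inner_nonneg_left η
  -- conclude by induction
  intro n
  induction n with
  | zero => exact ⟨by simpa using hbase, by simpa using h1p⟩
  | succ n ih =>
    obtain ⟨ih1, ih2⟩ := ih
    have e : Z^[n + 1] p = Z (Z^[n] p) := Function.iterate_succ_apply' Z n p
    have e2 : Z^[n + 1 + 1] p = Z (Z^[n + 1] p) := Function.iterate_succ_apply' Z (n + 1) p
    rw [e] at ih1
    refine ⟨?_, ?_⟩
    · rw [e2, e, hZsub]
      exact hZpos _ ih1
    · rw [e, ← hZ1, hZsub]
      exact hZpos _ ih2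
end

section
/- Let H be a finite-dimensional Hilbert space and A_1,...,A_d ∈ B(H) with Σ_j A_j* A_j = 1 (so Z(X) = Σ_j A_j* X A_j is unital completely positive). Suppose Ω ∈ H is a unit vector with A_j Ω = ω_j Ω for scalars ω_j, and let A_j^o be the compression of A_j to H^o = (ℂΩ)^⊥. Then Z is ergodic (its fixed point space is ℂ·1) if and only if the tuple (A_1^o, ..., A_d^o) is stable, i.e., lim_{n→∞} Σ_{|α|=n} ‖A^o_α ξ‖² = 0 for every ξ ∈ H^o, where for a word α = α_n...α_1 over {1,...,d}, A^o_α = A^o_{α_n} ⋯ A^o_{α_1}. -/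
open ContinuousLinearMap Filter Finset

section Words

variable {M : Type*} [Monoid M] {d : ℕ}

/-- The product of a word. -/
def wrd {n : ℕ} (A : Fin d → M) (α : Fin n → Fin d) : M :=
  (List.ofFn fun i => A (α i)).prod

@[simp] lemma wrd_zero (A : Fin d → M) (α : Fin 0 → Fin d) : wrd A α = 1 := by
  simp [wrd]

lemma wrd_succ_head {n : ℕ} (A : Fin d → M) (α : Fin (n + 1) → Fin d) :
    wrd A α = A (α 0) * wrd A (fun i => α i.succ) := by
  simp [wrd, List.ofFn_succ]

lemma wrd_succ_tail {n : ℕ} (A : Fin d → M) (α : Fin (n + 1) → Fin d) :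
    wrd A α = wrd A (fun i => α i.castSucc) * A (α (Fin.last n)) := by
  rw [wrd, List.ofFn_succ', List.prod_concat]; rfl

lemma wrd_cons {n : ℕ} (A : Fin d → M) (j : Fin d) (β : Fin n → Fin d) :
    wrd A (Fin.cons j β) = A j * wrd A β := by
  rw [wrd_succ_head]; simp

lemma wrd_snoc {n : ℕ} (A : Fin d → M) (β : Fin n → Fin d) (j : Fin d) :
    wrd A (Fin.snoc β j) = wrd A β * A j := by
  rw [wrd_succ_tail]
  simp [Fin.snoc_castSucc]

end Words

section Sums

variable {G : Type*} [AddCommMonoid G] {d n : ℕ}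

lemma sum_words_cons (f : (Fin (n + 1) → Fin d) → G) :
    ∑ α : Fin (n + 1) → Fin d, f α = ∑ j : Fin d, ∑ β : Fin n → Fin d, f (Fin.cons j β) := by
  rw [← Fintype.sum_prod_type (f := fun (p : Fin d × (Fin n → Fin d)) => f (Fin.cons p.1 p.2))]
  refine Fintype.sum_equiv (Fin.consEquiv fun _ => Fin d).symm _ _ (fun α => ?_)
  congr 1
  exact ((Fin.consEquiv fun _ => Fin d).apply_symm_apply α).symm

lemma sum_words_snoc (f : (Fin (n + 1) → Fin d) → G) :
    ∑ α : Fin (n + 1) → Fin d, f α = ∑ j : Fin d, ∑ β : Fin n → Fin d, f (Fin.snoc β j) := by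
  rw [← Fintype.sum_prod_type (f := fun (p : Fin d × (Fin n → Fin d)) => f (Fin.snoc p.2 p.1))]
  refine Fintype.sum_equiv (Fin.snocEquiv fun _ => Fin d).symm _ _ (fun α => ?_)
  congr 1
  exact ((Fin.snocEquiv fun _ => Fin d).apply_symm_apply α).symm

end Sums

section Hilbert

variable {H : Type*} [NormedAddCommGroup H] [InnerProductSpace ℂ H] [FiniteDimensional ℂ H]
  {d : ℕ}

local notation "⟪" x ", " y "⟫" => @inner ℂ _ _ x y

lemma step_isometry (A : Fin d → H →L[ℂ] H)
    (hunital : ∑ j, ContinuousLinearMap.adjoint (A j) ∘L A j = 1) (x : H) :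
    ∑ j, ‖A j x‖ ^ 2 = ‖x‖ ^ 2 := by
  have h : ⟪x, (∑ j, ContinuousLinearMap.adjoint (A j) ∘L A j) x⟫ = ⟪x, x⟫ := by
    rw [hunital]; rfl
  rw [ContinuousLinearMap.sum_apply] at h
  rw [inner_sum] at h
  have h2 : ∀ j : Fin d, ⟪x, (ContinuousLinearMap.adjoint (A j) ∘L A j) x⟫
      = ⟪A j x, A j x⟫ := fun j => by
    rw [ContinuousLinearMap.comp_apply, ContinuousLinearMap.adjoint_inner_right]
  rw [Finset.sum_congr rfl (fun j _ => h2 j)] at h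
  have h3 := congrArg (RCLike.re (K := ℂ)) h
  rw [map_sum] at h3
  simpa only [inner_self_eq_norm_sq] using h3

lemma word_isometry (A : Fin d → H →L[ℂ] H)
    (hunital : ∑ j, ContinuousLinearMap.adjoint (A j) ∘L A j = 1) :
    ∀ (n : ℕ) (x : H), ∑ α : Fin n → Fin d, ‖wrd A α x‖ ^ 2 = ‖x‖ ^ 2 := by
  intro n
  induction n with
  | zero => intro x; simp
  | succ n ih =>
    intro x
    rw [sum_words_snoc (fun α => ‖wrd A α x‖ ^ 2)]
    have : ∀ j : Fin d, ∑ β : Fin n → Fin d, ‖wrd A (Fin.snoc β j) x‖ ^ 2 = ‖A j x‖ ^ 2 := by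
      intro j
      rw [← ih (A j x)]
      refine Finset.sum_congr rfl (fun β _ => ?_)
      rw [wrd_snoc, ContinuousLinearMap.mul_apply]
    rw [Finset.sum_congr rfl (fun j _ => this j)]
    exact step_isometry A hunital x

end Hilbert

section Proj

variable {H : Type*} [NormedAddCommGroup H] [InnerProductSpace ℂ H] [FiniteDimensional ℂ H]
  {d : ℕ}

local notation "⟪" x ", " y "⟫" => @inner ℂ _ _ x y

lemma norm_proj_le (K : Submodule ℂ H) (y : H) : ‖Submodule.orthogonalProjectionOnto K y‖ ≤ ‖y‖ := by
  calc ‖Submodule.orthogonalProjectionOnto K y‖ ≤ ‖Submodule.orthogonalProjectionOnto K‖ * ‖y‖ :=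
        (Submodule.orthogonalProjectionOnto K).le_opNorm y
    _ ≤ 1 * ‖y‖ := by
        gcongr; exacts [Submodule.orthogonalProjectionOnto_norm_le K]
    _ = ‖y‖ := one_mul _

lemma decomp_vec (Ω : H) (hΩ : ‖Ω‖ = 1) (z : H) :
    z = ⟪Ω, z⟫ • Ω + (Submodule.orthogonalProjectionOnto ((ℂ ∙ Ω)ᗮ) z : H) := by
  have h := (ℂ ∙ Ω).starProjection_add_starProjection_orthogonal z
  rw [Submodule.starProjection_unit_singleton (𝕜 := ℂ) hΩ z, Submodule.starProjection_apply] at h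
  exact h.symm

lemma inner_omega_mem_orthogonal (Ω : H) (v : ((ℂ ∙ Ω)ᗮ : Submodule ℂ H)) :
    ⟪Ω, (v : H)⟫ = 0 :=
  (Submodule.mem_orthogonal _ _).mp v.2 Ω (Submodule.mem_span_singleton_self Ω)

lemma inner_proj_right (Ω : H) (hΩ : ‖Ω‖ = 1) (y : H) (v : ((ℂ ∙ Ω)ᗮ : Submodule ℂ H)) :
    ⟪y, (v : H)⟫ = ⟪((Submodule.orthogonalProjectionOnto ((ℂ ∙ Ω)ᗮ) y : _) : H), (v : H)⟫ := by
  conv_lhs => rw [decomp_vec Ω hΩ y]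
  rw [inner_add_left, inner_smul_left, inner_omega_mem_orthogonal Ω v]
  ring

variable (Ω : H) (A : Fin d → H →L[ℂ] H) (ω : Fin d → ℂ)
  (Ao : Fin d → ((ℂ ∙ Ω)ᗮ : Submodule ℂ H) →L[ℂ] ((ℂ ∙ Ω)ᗮ : Submodule ℂ H))

lemma P_comm (hΩ : ‖Ω‖ = 1) (heig : ∀ j, A j Ω = ω j • Ω)
    (hAo : ∀ (j : Fin d) (ξ : ((ℂ ∙ Ω)ᗮ : Submodule ℂ H)),
      Ao j ξ = Submodule.orthogonalProjectionOnto ((ℂ ∙ Ω)ᗮ) (A j (ξ : H)))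
    (j : Fin d) (x : H) :
    Ao j (Submodule.orthogonalProjectionOnto ((ℂ ∙ Ω)ᗮ) x) = Submodule.orthogonalProjectionOnto ((ℂ ∙ Ω)ᗮ) (A j x) := by
  rw [hAo]
  have hzero : Submodule.orthogonalProjectionOnto ((ℂ ∙ Ω)ᗮ) Ω = 0 :=
    Submodule.orthogonalProjectionOnto_orthogonalComplement_singleton_eq_zero Ω
  have hx : A j x = ⟪Ω, x⟫ • (ω j • Ω) + A j (Submodule.orthogonalProjectionOnto ((ℂ ∙ Ω)ᗮ) x : H) := by
    conv_lhs => rw [decomp_vec Ω hΩ x]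
    rw [map_add, map_smul, heig]
  rw [hx, map_add, map_smul, map_smul, hzero]
  simp

lemma P_comm_word (hΩ : ‖Ω‖ = 1) (heig : ∀ j, A j Ω = ω j • Ω)
    (hAo : ∀ (j : Fin d) (ξ : ((ℂ ∙ Ω)ᗮ : Submodule ℂ H)),
      Ao j ξ = Submodule.orthogonalProjectionOnto ((ℂ ∙ Ω)ᗮ) (A j (ξ : H))) :
    ∀ (n : ℕ) (α : Fin n → Fin d) (x : H),
      wrd Ao α (Submodule.orthogonalProjectionOnto ((ℂ ∙ Ω)ᗮ) x)
        = Submodule.orthogonalProjectionOnto ((ℂ ∙ Ω)ᗮ) (wrd A α x) := by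
  intro n
  induction n with
  | zero => intro α x; simp
  | succ n ih =>
    intro α x
    rw [← Fin.cons_self_tail α, wrd_cons, wrd_cons, ContinuousLinearMap.mul_apply,
      ContinuousLinearMap.mul_apply, ih, P_comm Ω A ω Ao hΩ heig hAo]

end Proj

section CS

lemma cs_sums {N : Type*} [Fintype N] (u v : N → ℝ) (hu : ∀ i, 0 ≤ u i) (hv : ∀ i, 0 ≤ v i) :
    ∑ i, u i * v i ≤ Real.sqrt (∑ i, u i ^ 2) * Real.sqrt (∑ i, v i ^ 2) := by
  have h := Finset.sum_mul_sq_le_sq_mul_sq Finset.univ u v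
  have hnn : 0 ≤ ∑ i, u i * v i :=
    Finset.sum_nonneg fun i _ => mul_nonneg (hu i) (hv i)
  calc ∑ i, u i * v i = Real.sqrt ((∑ i, u i * v i) ^ 2) := (Real.sqrt_sq hnn).symm
    _ ≤ Real.sqrt ((∑ i, u i ^ 2) * ∑ i, v i ^ 2) := Real.sqrt_le_sqrt h
    _ = _ := Real.sqrt_mul (Finset.sum_nonneg fun i _ => sq_nonneg _) _

lemma sqrt_le_of_sq_le {a b : ℝ} (hb : 0 ≤ b) (h : a ≤ b ^ 2) : Real.sqrt a ≤ b := by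
  calc Real.sqrt a ≤ Real.sqrt (b ^ 2) := Real.sqrt_le_sqrt h
    _ = b := Real.sqrt_sq hb

end CS

section SnormSec

variable {H : Type*} [NormedAddCommGroup H] [InnerProductSpace ℂ H] [FiniteDimensional ℂ H]
  {d : ℕ}

local notation "⟪" x ", " y "⟫" => @inner ℂ _ _ x y

variable (Ω : H) (A : Fin d → H →L[ℂ] H) (ω : Fin d → ℂ)
  (Ao : Fin d → ((ℂ ∙ Ω)ᗮ : Submodule ℂ H) →L[ℂ] ((ℂ ∙ Ω)ᗮ : Submodule ℂ H))

/-- `Σ_{|α|=n} ‖A^o_α ξ‖²`. -/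
noncomputable def Sn (n : ℕ) (ξ : ((ℂ ∙ Ω)ᗮ : Submodule ℂ H)) : ℝ :=
  ∑ α : Fin n → Fin d, ‖wrd Ao α ξ‖ ^ 2

lemma Sn_nonneg (n : ℕ) (ξ : ((ℂ ∙ Ω)ᗮ : Submodule ℂ H)) : 0 ≤ Sn Ω Ao n ξ :=
  Finset.sum_nonneg fun α _ => sq_nonneg _

lemma norm_word_Ao (hΩ : ‖Ω‖ = 1) (heig : ∀ j, A j Ω = ω j • Ω)
    (hAo : ∀ (j : Fin d) (ξ : ((ℂ ∙ Ω)ᗮ : Submodule ℂ H)),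
      Ao j ξ = Submodule.orthogonalProjectionOnto ((ℂ ∙ Ω)ᗮ) (A j (ξ : H)))
    {n : ℕ} (α : Fin n → Fin d) (ξ : ((ℂ ∙ Ω)ᗮ : Submodule ℂ H)) :
    wrd Ao α ξ = Submodule.orthogonalProjectionOnto ((ℂ ∙ Ω)ᗮ) (wrd A α (ξ : H)) := by
  conv_lhs => rw [show ξ = Submodule.orthogonalProjectionOnto ((ℂ ∙ Ω)ᗮ) (ξ : H) from
    (Submodule.orthogonalProjectionOnto_mem_subspace_eq_self ξ).symm]
  exact P_comm_word Ω A ω Ao hΩ heig hAo n α (ξ : H)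

lemma Sn_eq_proj_sum (hΩ : ‖Ω‖ = 1) (heig : ∀ j, A j Ω = ω j • Ω)
    (hAo : ∀ (j : Fin d) (ξ : ((ℂ ∙ Ω)ᗮ : Submodule ℂ H)),
      Ao j ξ = Submodule.orthogonalProjectionOnto ((ℂ ∙ Ω)ᗮ) (A j (ξ : H)))
    (n : ℕ) (ξ : ((ℂ ∙ Ω)ᗮ : Submodule ℂ H)) :
    Sn Ω Ao n ξ = ∑ α : Fin n → Fin d,
      ‖Submodule.orthogonalProjectionOnto ((ℂ ∙ Ω)ᗮ) (wrd A α (ξ : H))‖ ^ 2 :=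
  Finset.sum_congr rfl fun α _ => by rw [norm_word_Ao Ω A ω Ao hΩ heig hAo]

lemma Sn_le (hunital : ∑ j, ContinuousLinearMap.adjoint (A j) ∘L A j = 1)
    (hΩ : ‖Ω‖ = 1) (heig : ∀ j, A j Ω = ω j • Ω)
    (hAo : ∀ (j : Fin d) (ξ : ((ℂ ∙ Ω)ᗮ : Submodule ℂ H)),
      Ao j ξ = Submodule.orthogonalProjectionOnto ((ℂ ∙ Ω)ᗮ) (A j (ξ : H)))
    (n : ℕ) (ξ : ((ℂ ∙ Ω)ᗮ : Submodule ℂ H)) :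
    Sn Ω Ao n ξ ≤ ‖ξ‖ ^ 2 := by
  rw [Sn_eq_proj_sum Ω A ω Ao hΩ heig hAo]
  have : ∀ α : Fin n → Fin d,
      ‖Submodule.orthogonalProjectionOnto ((ℂ ∙ Ω)ᗮ) (wrd A α (ξ : H))‖ ^ 2 ≤ ‖wrd A α (ξ : H)‖ ^ 2 :=
    fun α => pow_le_pow_left₀ (norm_nonneg _) (norm_proj_le _ _) 2
  calc _ ≤ ∑ α : Fin n → Fin d, ‖wrd A α (ξ : H)‖ ^ 2 :=
        Finset.sum_le_sum fun α _ => this α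
    _ = ‖(ξ : H)‖ ^ 2 := word_isometry A hunital n (ξ : H)
    _ = ‖ξ‖ ^ 2 := rfl

lemma Sn_succ_le (hunital : ∑ j, ContinuousLinearMap.adjoint (A j) ∘L A j = 1)
    (hΩ : ‖Ω‖ = 1) (heig : ∀ j, A j Ω = ω j • Ω)
    (hAo : ∀ (j : Fin d) (ξ : ((ℂ ∙ Ω)ᗮ : Submodule ℂ H)),
      Ao j ξ = Submodule.orthogonalProjectionOnto ((ℂ ∙ Ω)ᗮ) (A j (ξ : H)))
    (n : ℕ) (ξ : ((ℂ ∙ Ω)ᗮ : Submodule ℂ H)) :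
    Sn Ω Ao (n + 1) ξ ≤ Sn Ω Ao n ξ := by
  rw [Sn, sum_words_cons (fun α => ‖wrd Ao α ξ‖ ^ 2), Finset.sum_comm]
  refine Finset.sum_le_sum fun β _ => ?_
  have hterm : ∀ j : Fin d, ‖wrd Ao (Fin.cons j β) ξ‖ ^ 2
      = ‖Ao j (wrd Ao β ξ)‖ ^ 2 := fun j => by
    rw [wrd_cons, ContinuousLinearMap.mul_apply]
  rw [Finset.sum_congr rfl fun j _ => hterm j]
  set η := wrd Ao β ξ
  have hb : ∀ j : Fin d, ‖Ao j η‖ ^ 2 ≤ ‖A j (η : H)‖ ^ 2 := by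
    intro j
    rw [hAo]
    exact pow_le_pow_left₀ (norm_nonneg _) (norm_proj_le _ _) 2
  calc ∑ j, ‖Ao j η‖ ^ 2 ≤ ∑ j, ‖A j (η : H)‖ ^ 2 := Finset.sum_le_sum fun j _ => hb j
    _ = ‖(η : H)‖ ^ 2 := step_isometry A hunital (η : H)
    _ = ‖η‖ ^ 2 := rfl

lemma Sn_tendsto (hunital : ∑ j, ContinuousLinearMap.adjoint (A j) ∘L A j = 1)
    (hΩ : ‖Ω‖ = 1) (heig : ∀ j, A j Ω = ω j • Ω)
    (hAo : ∀ (j : Fin d) (ξ : ((ℂ ∙ Ω)ᗮ : Submodule ℂ H)),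
      Ao j ξ = Submodule.orthogonalProjectionOnto ((ℂ ∙ Ω)ᗮ) (A j (ξ : H)))
    (ξ : ((ℂ ∙ Ω)ᗮ : Submodule ℂ H)) :
    Filter.Tendsto (fun n => Sn Ω Ao n ξ) Filter.atTop (nhds (⨅ n, Sn Ω Ao n ξ)) :=
  tendsto_atTop_ciInf
    (antitone_nat_of_succ_le fun n => Sn_succ_le Ω A ω Ao hunital hΩ heig hAo n ξ)
    ⟨0, fun x ⟨n, hn⟩ => hn ▸ Sn_nonneg Ω Ao n ξ⟩

end SnormSec

section Fop

variable {H : Type*} [NormedAddCommGroup H] [InnerProductSpace ℂ H] [FiniteDimensional ℂ H]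
  {d : ℕ}

local notation "⟪" x ", " y "⟫" => @inner ℂ _ _ x y

open ContinuousLinearMap

lemma Fop_fixed (A : Fin d → H →L[ℂ] H) (Y : H →L[ℂ] H)
    (hY : ∑ j, adjoint (A j) ∘L Y ∘L A j = Y) (n : ℕ) :
    ∑ α : Fin n → Fin d, adjoint (wrd A α) ∘L Y ∘L wrd A α = Y := by
  induction n with
  | zero =>
    have h1 : adjoint (1 : H →L[ℂ] H) = 1 := adjoint_id
    simp [h1, ContinuousLinearMap.one_def, adjoint_id]
  | succ n ih =>
    rw [sum_words_snoc (fun α => adjoint (wrd A α) ∘L Y ∘L wrd A α)]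
    have hterm : ∀ (j : Fin d) (β : Fin n → Fin d),
        adjoint (wrd A (Fin.snoc β j)) ∘L Y ∘L wrd A (Fin.snoc β j)
          = adjoint (A j) * ((adjoint (wrd A β) ∘L Y ∘L wrd A β) * A j) := by
      intro j β
      rw [wrd_snoc]
      simp only [ContinuousLinearMap.mul_def, adjoint_comp]
      rfl
    calc ∑ j : Fin d, ∑ β : Fin n → Fin d,
          adjoint (wrd A (Fin.snoc β j)) ∘L Y ∘L wrd A (Fin.snoc β j)
        = ∑ j : Fin d, ∑ β : Fin n → Fin d,
          adjoint (A j) * ((adjoint (wrd A β) ∘L Y ∘L wrd A β) * A j) :=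
          Finset.sum_congr rfl fun j _ => Finset.sum_congr rfl fun β _ => hterm j β
      _ = ∑ j : Fin d, adjoint (A j)
            * ((∑ β : Fin n → Fin d, adjoint (wrd A β) ∘L Y ∘L wrd A β) * A j) := by
          refine Finset.sum_congr rfl fun j _ => ?_
          rw [← Finset.mul_sum, ← Finset.sum_mul]
      _ = Y := by rw [ih]; exact hY

end Fop

section XopSec

variable {H : Type*} [NormedAddCommGroup H] [InnerProductSpace ℂ H] [FiniteDimensional ℂ H]
  {d : ℕ}

local notation "⟪" x ", " y "⟫" => @inner ℂ _ _ x y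

open ContinuousLinearMap

variable (Ω : H) (A : Fin d → H →L[ℂ] H) (ω : Fin d → ℂ)
  (Ao : Fin d → ((ℂ ∙ Ω)ᗮ : Submodule ℂ H) →L[ℂ] ((ℂ ∙ Ω)ᗮ : Submodule ℂ H))

/-- The orthogonal projection onto `H^o`, as an endomorphism of `H`. -/
noncomputable def Pop : H →L[ℂ] H :=
  ((ℂ ∙ Ω)ᗮ).subtypeL ∘L Submodule.orthogonalProjectionOnto ((ℂ ∙ Ω)ᗮ)

/-- `Σ_{|α|=n} A_α^* P A_α`. -/
noncomputable def Xop (n : ℕ) : H →L[ℂ] H :=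
  ∑ α : Fin n → Fin d, adjoint (wrd A α) ∘L Pop Ω ∘L wrd A α

lemma Xop_inner (hΩ : ‖Ω‖ = 1) (n : ℕ) (w x : H) :
    ⟪w, Xop Ω A n x⟫ = ∑ α : Fin n → Fin d,
      ⟪((Submodule.orthogonalProjectionOnto ((ℂ ∙ Ω)ᗮ) (wrd A α w) : _) : H),
       ((Submodule.orthogonalProjectionOnto ((ℂ ∙ Ω)ᗮ) (wrd A α x) : _) : H)⟫ := by
  rw [Xop, ContinuousLinearMap.sum_apply, inner_sum]
  refine Finset.sum_congr rfl fun α _ => ?_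
  rw [ContinuousLinearMap.comp_apply, ContinuousLinearMap.comp_apply,
    ContinuousLinearMap.adjoint_inner_right]
  show ⟪wrd A α w, ((Submodule.orthogonalProjectionOnto ((ℂ ∙ Ω)ᗮ) (wrd A α x) : _) : H)⟫ = _
  exact inner_proj_right Ω hΩ (wrd A α w) _

lemma Xop_inner_self (hΩ : ‖Ω‖ = 1) (heig : ∀ j, A j Ω = ω j • Ω)
    (hAo : ∀ (j : Fin d) (ξ : ((ℂ ∙ Ω)ᗮ : Submodule ℂ H)),
      Ao j ξ = Submodule.orthogonalProjectionOnto ((ℂ ∙ Ω)ᗮ) (A j (ξ : H)))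
    (n : ℕ) (x : H) :
    ⟪x, Xop Ω A n x⟫ = ((Sn Ω Ao n (Submodule.orthogonalProjectionOnto ((ℂ ∙ Ω)ᗮ) x) : ℝ) : ℂ) := by
  rw [Xop_inner Ω A hΩ n x x, Sn]
  push_cast
  refine Finset.sum_congr rfl fun α _ => ?_
  rw [P_comm_word Ω A ω Ao hΩ heig hAo n α x]
  rw [inner_self_eq_norm_sq_to_K]
  norm_cast

lemma sqrt_sum_proj_le (hunital : ∑ j, ContinuousLinearMap.adjoint (A j) ∘L A j = 1)
    (n : ℕ) (u : H) :
    Real.sqrt (∑ α : Fin n → Fin d,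
        ‖((Submodule.orthogonalProjectionOnto ((ℂ ∙ Ω)ᗮ) (wrd A α u) : _) : H)‖ ^ 2) ≤ ‖u‖ := by
  refine sqrt_le_of_sq_le (norm_nonneg u) ?_
  calc ∑ α : Fin n → Fin d, ‖((Submodule.orthogonalProjectionOnto ((ℂ ∙ Ω)ᗮ) (wrd A α u) : _) : H)‖ ^ 2
      ≤ ∑ α : Fin n → Fin d, ‖wrd A α u‖ ^ 2 := by
        refine Finset.sum_le_sum fun α _ => ?_
        exact pow_le_pow_left₀ (norm_nonneg _) (norm_proj_le _ _) 2
    _ = ‖u‖ ^ 2 := word_isometry A hunital n u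

lemma Xop_inner_le (hunital : ∑ j, ContinuousLinearMap.adjoint (A j) ∘L A j = 1)
    (hΩ : ‖Ω‖ = 1) (n : ℕ) (w x : H) :
    ‖⟪w, Xop Ω A n x⟫‖ ≤ ‖w‖ * ‖x‖ := by
  rw [Xop_inner Ω A hΩ n w x]
  calc ‖∑ α : Fin n → Fin d,
        ⟪((Submodule.orthogonalProjectionOnto ((ℂ ∙ Ω)ᗮ) (wrd A α w) : _) : H),
         ((Submodule.orthogonalProjectionOnto ((ℂ ∙ Ω)ᗮ) (wrd A α x) : _) : H)⟫‖
      ≤ ∑ α : Fin n → Fin d,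
        ‖((Submodule.orthogonalProjectionOnto ((ℂ ∙ Ω)ᗮ) (wrd A α w) : _) : H)‖ *
        ‖((Submodule.orthogonalProjectionOnto ((ℂ ∙ Ω)ᗮ) (wrd A α x) : _) : H)‖ := by
        refine (norm_sum_le _ _).trans (Finset.sum_le_sum fun α _ => ?_)
        exact norm_inner_le_norm _ _
    _ ≤ Real.sqrt (∑ α : Fin n → Fin d,
          ‖((Submodule.orthogonalProjectionOnto ((ℂ ∙ Ω)ᗮ) (wrd A α w) : _) : H)‖ ^ 2) *
        Real.sqrt (∑ α : Fin n → Fin d,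
          ‖((Submodule.orthogonalProjectionOnto ((ℂ ∙ Ω)ᗮ) (wrd A α x) : _) : H)‖ ^ 2) :=
        cs_sums _ _ (fun α => norm_nonneg _) (fun α => norm_nonneg _)
    _ ≤ ‖w‖ * ‖x‖ := by
        have h1 := sqrt_sum_proj_le Ω A hunital n w
        have h2 := sqrt_sum_proj_le Ω A hunital n x
        exact mul_le_mul h1 h2 (Real.sqrt_nonneg _) (norm_nonneg _)

lemma Xop_norm_le (hunital : ∑ j, ContinuousLinearMap.adjoint (A j) ∘L A j = 1)
    (hΩ : ‖Ω‖ = 1) (n : ℕ) : ‖Xop Ω A n‖ ≤ 1 := by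
  refine ContinuousLinearMap.opNorm_le_bound _ zero_le_one fun x => ?_
  rw [one_mul]
  rcases eq_or_ne (Xop Ω A n x) 0 with h | h
  · rw [h, norm_zero]; exact norm_nonneg x
  · have hpos : 0 < ‖Xop Ω A n x‖ := norm_pos_iff.mpr h
    have hsq : ‖Xop Ω A n x‖ ^ 2 ≤ ‖Xop Ω A n x‖ * ‖x‖ := by
      have h1 : (‖Xop Ω A n x‖ : ℝ) ^ 2 = RCLike.re ⟪Xop Ω A n x, Xop Ω A n x⟫ :=
        (inner_self_eq_norm_sq _).symm
      have h2 : RCLike.re ⟪Xop Ω A n x, Xop Ω A n x⟫ ≤ ‖⟪Xop Ω A n x, Xop Ω A n x⟫‖ :=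
        RCLike.re_le_norm _
      exact h1 ▸ h2.trans (Xop_inner_le Ω A hunital hΩ n _ x)
    nlinarith [norm_nonneg x]

lemma Xop_succ (hunital : ∑ j, ContinuousLinearMap.adjoint (A j) ∘L A j = 1) (n : ℕ) :
    ∑ j, adjoint (A j) ∘L Xop Ω A n ∘L A j = Xop Ω A (n + 1) := by
  rw [Xop, Xop, sum_words_snoc (fun α => adjoint (wrd A α) ∘L Pop Ω ∘L wrd A α)]
  have hterm : ∀ (j : Fin d) (β : Fin n → Fin d),
      adjoint (wrd A (Fin.snoc β j)) ∘L Pop Ω ∘L wrd A (Fin.snoc β j)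
        = adjoint (A j) * ((adjoint (wrd A β) ∘L Pop Ω ∘L wrd A β) * A j) := by
    intro j β
    rw [wrd_snoc]
    simp only [ContinuousLinearMap.mul_def, adjoint_comp]
    rfl
  refine (Finset.sum_congr rfl fun j _ => ?_).symm
  rw [Finset.sum_congr rfl fun β (_ : β ∈ Finset.univ) => hterm j β,
    ← Finset.mul_sum, ← Finset.sum_mul]
  rfl

end XopSec

section Bound

variable {H : Type*} [NormedAddCommGroup H] [InnerProductSpace ℂ H] [FiniteDimensional ℂ H]
  {d : ℕ}

local notation "⟪" x ", " y "⟫" => @inner ℂ _ _ x y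

open ContinuousLinearMap

variable (Ω : H) (A : Fin d → H →L[ℂ] H) (ω : Fin d → ℂ)
  (Ao : Fin d → ((ℂ ∙ Ω)ᗮ : Submodule ℂ H) →L[ℂ] ((ℂ ∙ Ω)ᗮ : Submodule ℂ H))

lemma sum_inner_sq_le (hunital : ∑ j, ContinuousLinearMap.adjoint (A j) ∘L A j = 1)
    (hΩ : ‖Ω‖ = 1) (n : ℕ) (u : H) :
    Real.sqrt (∑ α : Fin n → Fin d, ‖⟪Ω, wrd A α u⟫‖ ^ 2) ≤ ‖u‖ := by
  refine sqrt_le_of_sq_le (norm_nonneg u) ?_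
  calc ∑ α : Fin n → Fin d, ‖⟪Ω, wrd A α u⟫‖ ^ 2
      ≤ ∑ α : Fin n → Fin d, ‖wrd A α u‖ ^ 2 := by
        refine Finset.sum_le_sum fun α _ => ?_
        refine pow_le_pow_left₀ (norm_nonneg _) ?_ 2
        calc ‖⟪Ω, wrd A α u⟫‖ ≤ ‖Ω‖ * ‖wrd A α u‖ := norm_inner_le_norm _ _
          _ = ‖wrd A α u‖ := by rw [hΩ, one_mul]
    _ = ‖u‖ ^ 2 := word_isometry A hunital n u

lemma sqrt_proj_sum_eq (hΩ : ‖Ω‖ = 1) (heig : ∀ j, A j Ω = ω j • Ω)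
    (hAo : ∀ (j : Fin d) (ξ : ((ℂ ∙ Ω)ᗮ : Submodule ℂ H)),
      Ao j ξ = Submodule.orthogonalProjectionOnto ((ℂ ∙ Ω)ᗮ) (A j (ξ : H)))
    (n : ℕ) (u : H) :
    ∑ α : Fin n → Fin d, ‖Submodule.orthogonalProjectionOnto ((ℂ ∙ Ω)ᗮ) (wrd A α u)‖ ^ 2
      = Sn Ω Ao n (Submodule.orthogonalProjectionOnto ((ℂ ∙ Ω)ᗮ) u) :=
  (Finset.sum_congr rfl fun α _ => by
    rw [P_comm_word Ω A ω Ao hΩ heig hAo n α u]).symm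

lemma bound_aux (hunital : ∑ j, ContinuousLinearMap.adjoint (A j) ∘L A j = 1)
    (hΩ : ‖Ω‖ = 1) (heig : ∀ j, A j Ω = ω j • Ω)
    (hAo : ∀ (j : Fin d) (ξ : ((ℂ ∙ Ω)ᗮ : Submodule ℂ H)),
      Ao j ξ = Submodule.orthogonalProjectionOnto ((ℂ ∙ Ω)ᗮ) (A j (ξ : H)))
    (Y : H →L[ℂ] H) (hYΩ : ⟪Ω, Y Ω⟫ = 0) (n : ℕ) (x y : H) :
    ‖∑ α : Fin n → Fin d, ⟪wrd A α x, Y (wrd A α y)⟫‖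
      ≤ ‖Y‖ * ‖x‖ * Real.sqrt (Sn Ω Ao n (Submodule.orthogonalProjectionOnto ((ℂ ∙ Ω)ᗮ) y))
        + ‖Y‖ * ‖y‖ * Real.sqrt (Sn Ω Ao n (Submodule.orthogonalProjectionOnto ((ℂ ∙ Ω)ᗮ) x))
        + ‖Y‖ * (Real.sqrt (Sn Ω Ao n (Submodule.orthogonalProjectionOnto ((ℂ ∙ Ω)ᗮ) x))
            * Real.sqrt (Sn Ω Ao n (Submodule.orthogonalProjectionOnto ((ℂ ∙ Ω)ᗮ) y))) := by
  have hexp : ∀ u w : H, ⟪u, Y w⟫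
      = (starRingEnd ℂ) ⟪Ω, u⟫ * ⟪Ω, Y (Submodule.orthogonalProjectionOnto ((ℂ ∙ Ω)ᗮ) w : H)⟫
        + ⟪Ω, w⟫ * ⟪((Submodule.orthogonalProjectionOnto ((ℂ ∙ Ω)ᗮ) u : _) : H), Y Ω⟫
        + ⟪((Submodule.orthogonalProjectionOnto ((ℂ ∙ Ω)ᗮ) u : _) : H),
            Y (Submodule.orthogonalProjectionOnto ((ℂ ∙ Ω)ᗮ) w : H)⟫ := by
    intro u w
    conv_lhs => rw [decomp_vec Ω hΩ u, decomp_vec Ω hΩ w]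
    rw [map_add, map_smul, inner_add_left, inner_add_right, inner_add_right,
      inner_smul_left, inner_smul_left, inner_smul_right, inner_smul_right, hYΩ]
    ring
  rw [Finset.sum_congr rfl fun α (_ : α ∈ Finset.univ) => hexp (wrd A α x) (wrd A α y),
    Finset.sum_add_distrib, Finset.sum_add_distrib]
  have hPx := sqrt_proj_sum_eq Ω A ω Ao hΩ heig hAo n x
  have hPy := sqrt_proj_sum_eq Ω A ω Ao hΩ heig hAo n y
  have hb2 : ‖∑ α : Fin n → Fin d, (starRingEnd ℂ) ⟪Ω, wrd A α x⟫
        * ⟪Ω, Y (Submodule.orthogonalProjectionOnto ((ℂ ∙ Ω)ᗮ) (wrd A α y) : H)⟫‖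
      ≤ ‖Y‖ * ‖x‖ * Real.sqrt (Sn Ω Ao n (Submodule.orthogonalProjectionOnto ((ℂ ∙ Ω)ᗮ) y)) := by
    calc ‖∑ α : Fin n → Fin d, (starRingEnd ℂ) ⟪Ω, wrd A α x⟫
          * ⟪Ω, Y (Submodule.orthogonalProjectionOnto ((ℂ ∙ Ω)ᗮ) (wrd A α y) : H)⟫‖
        ≤ ∑ α : Fin n → Fin d, ‖⟪Ω, wrd A α x⟫‖
          * (‖Y‖ * ‖Submodule.orthogonalProjectionOnto ((ℂ ∙ Ω)ᗮ) (wrd A α y)‖) := by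
          refine (norm_sum_le _ _).trans (Finset.sum_le_sum fun α _ => ?_)
          rw [norm_mul, RCLike.norm_conj]
          refine mul_le_mul_of_nonneg_left ?_ (norm_nonneg _)
          calc ‖⟪Ω, Y (Submodule.orthogonalProjectionOnto ((ℂ ∙ Ω)ᗮ) (wrd A α y) : H)⟫‖
              ≤ ‖Ω‖ * ‖Y (Submodule.orthogonalProjectionOnto ((ℂ ∙ Ω)ᗮ) (wrd A α y) : H)‖ :=
                norm_inner_le_norm _ _
            _ = ‖Y (Submodule.orthogonalProjectionOnto ((ℂ ∙ Ω)ᗮ) (wrd A α y) : H)‖ := by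
                rw [hΩ, one_mul]
            _ ≤ ‖Y‖ * ‖Submodule.orthogonalProjectionOnto ((ℂ ∙ Ω)ᗮ) (wrd A α y)‖ := Y.le_opNorm _
      _ = ‖Y‖ * ∑ α : Fin n → Fin d, ‖⟪Ω, wrd A α x⟫‖
            * ‖Submodule.orthogonalProjectionOnto ((ℂ ∙ Ω)ᗮ) (wrd A α y)‖ := by
          rw [Finset.mul_sum]; exact Finset.sum_congr rfl fun α _ => by ring
      _ ≤ ‖Y‖ * (Real.sqrt (∑ α : Fin n → Fin d, ‖⟪Ω, wrd A α x⟫‖ ^ 2)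
            * Real.sqrt (∑ α : Fin n → Fin d,
                ‖Submodule.orthogonalProjectionOnto ((ℂ ∙ Ω)ᗮ) (wrd A α y)‖ ^ 2)) :=
          mul_le_mul_of_nonneg_left
            (cs_sums _ _ (fun α => norm_nonneg _) (fun α => norm_nonneg _)) (norm_nonneg Y)
      _ ≤ ‖Y‖ * ‖x‖ * Real.sqrt (Sn Ω Ao n (Submodule.orthogonalProjectionOnto ((ℂ ∙ Ω)ᗮ) y)) := by
          rw [hPy, mul_assoc]
          exact mul_le_mul_of_nonneg_left
            (mul_le_mul_of_nonneg_right (sum_inner_sq_le Ω A hunital hΩ n x)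
              (Real.sqrt_nonneg _)) (norm_nonneg Y)
  have hb3 : ‖∑ α : Fin n → Fin d, ⟪Ω, wrd A α y⟫
        * ⟪((Submodule.orthogonalProjectionOnto ((ℂ ∙ Ω)ᗮ) (wrd A α x) : _) : H), Y Ω⟫‖
      ≤ ‖Y‖ * ‖y‖ * Real.sqrt (Sn Ω Ao n (Submodule.orthogonalProjectionOnto ((ℂ ∙ Ω)ᗮ) x)) := by
    calc ‖∑ α : Fin n → Fin d, ⟪Ω, wrd A α y⟫
          * ⟪((Submodule.orthogonalProjectionOnto ((ℂ ∙ Ω)ᗮ) (wrd A α x) : _) : H), Y Ω⟫‖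
        ≤ ∑ α : Fin n → Fin d, ‖⟪Ω, wrd A α y⟫‖
          * (‖Y‖ * ‖Submodule.orthogonalProjectionOnto ((ℂ ∙ Ω)ᗮ) (wrd A α x)‖) := by
          refine (norm_sum_le _ _).trans (Finset.sum_le_sum fun α _ => ?_)
          rw [norm_mul]
          refine mul_le_mul_of_nonneg_left ?_ (norm_nonneg _)
          calc ‖⟪((Submodule.orthogonalProjectionOnto ((ℂ ∙ Ω)ᗮ) (wrd A α x) : _) : H), Y Ω⟫‖
              ≤ ‖Submodule.orthogonalProjectionOnto ((ℂ ∙ Ω)ᗮ) (wrd A α x)‖ * ‖Y Ω‖ :=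
                norm_inner_le_norm _ _
            _ ≤ ‖Submodule.orthogonalProjectionOnto ((ℂ ∙ Ω)ᗮ) (wrd A α x)‖ * (‖Y‖ * ‖Ω‖) :=
                mul_le_mul_of_nonneg_left (Y.le_opNorm _) (norm_nonneg _)
            _ = ‖Y‖ * ‖Submodule.orthogonalProjectionOnto ((ℂ ∙ Ω)ᗮ) (wrd A α x)‖ := by
                rw [hΩ]; ring
      _ = ‖Y‖ * ∑ α : Fin n → Fin d, ‖⟪Ω, wrd A α y⟫‖
            * ‖Submodule.orthogonalProjectionOnto ((ℂ ∙ Ω)ᗮ) (wrd A α x)‖ := by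
          rw [Finset.mul_sum]; exact Finset.sum_congr rfl fun α _ => by ring
      _ ≤ ‖Y‖ * (Real.sqrt (∑ α : Fin n → Fin d, ‖⟪Ω, wrd A α y⟫‖ ^ 2)
            * Real.sqrt (∑ α : Fin n → Fin d,
                ‖Submodule.orthogonalProjectionOnto ((ℂ ∙ Ω)ᗮ) (wrd A α x)‖ ^ 2)) :=
          mul_le_mul_of_nonneg_left
            (cs_sums _ _ (fun α => norm_nonneg _) (fun α => norm_nonneg _)) (norm_nonneg Y)
      _ ≤ ‖Y‖ * ‖y‖ * Real.sqrt (Sn Ω Ao n (Submodule.orthogonalProjectionOnto ((ℂ ∙ Ω)ᗮ) x)) := by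
          rw [hPx, mul_assoc]
          exact mul_le_mul_of_nonneg_left
            (mul_le_mul_of_nonneg_right (sum_inner_sq_le Ω A hunital hΩ n y)
              (Real.sqrt_nonneg _)) (norm_nonneg Y)
  have hb4 : ‖∑ α : Fin n → Fin d,
        ⟪((Submodule.orthogonalProjectionOnto ((ℂ ∙ Ω)ᗮ) (wrd A α x) : _) : H),
          Y (Submodule.orthogonalProjectionOnto ((ℂ ∙ Ω)ᗮ) (wrd A α y) : H)⟫‖
      ≤ ‖Y‖ * (Real.sqrt (Sn Ω Ao n (Submodule.orthogonalProjectionOnto ((ℂ ∙ Ω)ᗮ) x))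
          * Real.sqrt (Sn Ω Ao n (Submodule.orthogonalProjectionOnto ((ℂ ∙ Ω)ᗮ) y))) := by
    calc ‖∑ α : Fin n → Fin d,
          ⟪((Submodule.orthogonalProjectionOnto ((ℂ ∙ Ω)ᗮ) (wrd A α x) : _) : H),
            Y (Submodule.orthogonalProjectionOnto ((ℂ ∙ Ω)ᗮ) (wrd A α y) : H)⟫‖
        ≤ ∑ α : Fin n → Fin d, ‖Y‖ * (‖Submodule.orthogonalProjectionOnto ((ℂ ∙ Ω)ᗮ) (wrd A α x)‖
            * ‖Submodule.orthogonalProjectionOnto ((ℂ ∙ Ω)ᗮ) (wrd A α y)‖) := by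
          refine (norm_sum_le _ _).trans (Finset.sum_le_sum fun α _ => ?_)
          calc ‖⟪((Submodule.orthogonalProjectionOnto ((ℂ ∙ Ω)ᗮ) (wrd A α x) : _) : H),
                Y (Submodule.orthogonalProjectionOnto ((ℂ ∙ Ω)ᗮ) (wrd A α y) : H)⟫‖
              ≤ ‖Submodule.orthogonalProjectionOnto ((ℂ ∙ Ω)ᗮ) (wrd A α x)‖
                * ‖Y (Submodule.orthogonalProjectionOnto ((ℂ ∙ Ω)ᗮ) (wrd A α y) : H)‖ :=
                norm_inner_le_norm _ _
            _ ≤ ‖Submodule.orthogonalProjectionOnto ((ℂ ∙ Ω)ᗮ) (wrd A α x)‖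
                * (‖Y‖ * ‖Submodule.orthogonalProjectionOnto ((ℂ ∙ Ω)ᗮ) (wrd A α y)‖) :=
                mul_le_mul_of_nonneg_left (Y.le_opNorm _) (norm_nonneg _)
            _ = ‖Y‖ * (‖Submodule.orthogonalProjectionOnto ((ℂ ∙ Ω)ᗮ) (wrd A α x)‖
                * ‖Submodule.orthogonalProjectionOnto ((ℂ ∙ Ω)ᗮ) (wrd A α y)‖) := by ring
      _ = ‖Y‖ * ∑ α : Fin n → Fin d, ‖Submodule.orthogonalProjectionOnto ((ℂ ∙ Ω)ᗮ) (wrd A α x)‖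
            * ‖Submodule.orthogonalProjectionOnto ((ℂ ∙ Ω)ᗮ) (wrd A α y)‖ := by
          rw [Finset.mul_sum]
      _ ≤ ‖Y‖ * (Real.sqrt (∑ α : Fin n → Fin d,
              ‖Submodule.orthogonalProjectionOnto ((ℂ ∙ Ω)ᗮ) (wrd A α x)‖ ^ 2)
            * Real.sqrt (∑ α : Fin n → Fin d,
              ‖Submodule.orthogonalProjectionOnto ((ℂ ∙ Ω)ᗮ) (wrd A α y)‖ ^ 2)) :=
          mul_le_mul_of_nonneg_left
            (cs_sums _ _ (fun α => norm_nonneg _) (fun α => norm_nonneg _)) (norm_nonneg Y)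
      _ = ‖Y‖ * (Real.sqrt (Sn Ω Ao n (Submodule.orthogonalProjectionOnto ((ℂ ∙ Ω)ᗮ) x))
            * Real.sqrt (Sn Ω Ao n (Submodule.orthogonalProjectionOnto ((ℂ ∙ Ω)ᗮ) y))) := by
          rw [hPx, hPy]
  calc ‖_ + _ + _‖ ≤ _ := norm_add₃_le
    _ ≤ _ := add_le_add (add_le_add hb2 hb3) hb4

end Bound

local notation "⟪" x ", " y "⟫" => @inner ℂ _ _ x y

set_option maxHeartbeats 2000000 in
set_option synthInstance.maxHeartbeats 200000 in
/-- On a finite-dimensional Hilbert space, with `Σ_j A_j* A_j = 1`, `Ω` a unit common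
eigenvector of the `A_j`, and `A_j^o` the compression of `A_j` to `H^o = (ℂΩ)^⊥`,
the transition operator `Z(X) = Σ_j A_j* X A_j` is ergodic (fixed points = ℂ·1) iff
the tuple `(A_1^o,…,A_d^o)` is stable: `Σ_{|α|=n} ‖A^o_α ξ‖² → 0` for every `ξ ∈ H^o`. -/
theorem ergodic_iff_stable {H : Type*}
    [NormedAddCommGroup H] [InnerProductSpace ℂ H] [FiniteDimensional ℂ H]
    (d : ℕ) (A : Fin d → H →L[ℂ] H)
    (hunital : ∑ j, ContinuousLinearMap.adjoint (A j) ∘L A j = 1)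
    (Ω : H) (hΩ : ‖Ω‖ = 1)
    (ω : Fin d → ℂ) (heig : ∀ j, A j Ω = ω j • Ω)
    (Ao : Fin d → ↥((ℂ ∙ Ω)ᗮ) →L[ℂ] ↥((ℂ ∙ Ω)ᗮ))
    (hAo : ∀ (j : Fin d) (ξ : ↥((ℂ ∙ Ω)ᗮ)),
      Ao j ξ = Submodule.orthogonalProjectionOnto ((ℂ ∙ Ω)ᗮ) (A j (ξ : H))) :
    (∀ X : H →L[ℂ] H,
        (∑ j, ContinuousLinearMap.adjoint (A j) ∘L X ∘L A j) = X → ∃ c : ℂ, X = c • 1) ↔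
      (∀ ξ : ↥((ℂ ∙ Ω)ᗮ), Filter.Tendsto
        (fun n : ℕ => ∑ α : Fin n → Fin d, ‖(List.ofFn fun i => Ao (α i)).prod ξ‖ ^ 2)
        Filter.atTop (nhds 0)) := by
  have hΩΩ : ⟪Ω, Ω⟫ = 1 := by
    rw [inner_self_eq_norm_sq_to_K, hΩ]; norm_num
  constructor
  · -- ergodic ⇒ stable
    intro herg ξ
    show Filter.Tendsto (fun n : ℕ => Sn Ω Ao n ξ) Filter.atTop (nhds 0)
    haveI : ProperSpace (H →L[ℂ] H) := FiniteDimensional.proper ℂ _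
    have hball : ∀ n : ℕ, Xop Ω A n ∈ Metric.closedBall (0 : H →L[ℂ] H) 1 := fun n => by
      rw [Metric.mem_closedBall, dist_zero_right]; exact Xop_norm_le Ω A hunital hΩ n
    obtain ⟨X, -, φ, hφ, hconv⟩ :=
      (isCompact_closedBall (0 : H →L[ℂ] H) 1).tendsto_subseq hball
    have hSnt : ∀ ζ : ↥((ℂ ∙ Ω)ᗮ), Filter.Tendsto (fun n => Sn Ω Ao n ζ)
        Filter.atTop (nhds (⨅ n, Sn Ω Ao n ζ)) := fun ζ =>
      Sn_tendsto Ω A ω Ao hunital hΩ heig hAo ζ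
    -- quadratic form of the limit operator
    have hXz : ∀ z : H, ⟪z, X z⟫
        = ((⨅ n, Sn Ω Ao n (Submodule.orthogonalProjectionOnto ((ℂ ∙ Ω)ᗮ) z) : ℝ) : ℂ) := by
      intro z
      have hcont : Continuous fun T : H →L[ℂ] H => ⟪z, T z⟫ :=
        continuous_const.inner ((ContinuousLinearMap.apply ℂ H z).continuous)
      have h1 : Filter.Tendsto (fun k => ⟪z, Xop Ω A (φ k) z⟫)
          Filter.atTop (nhds ⟪z, X z⟫) := (hcont.tendsto X).comp hconv
      have h2 : Filter.Tendsto (fun k => ⟪z, Xop Ω A (φ k) z⟫) Filter.atTop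
          (nhds ((⨅ n, Sn Ω Ao n (Submodule.orthogonalProjectionOnto ((ℂ ∙ Ω)ᗮ) z) : ℝ) : ℂ)) := by
        have h3 : Filter.Tendsto
            (fun k => Sn Ω Ao (φ k) (Submodule.orthogonalProjectionOnto ((ℂ ∙ Ω)ᗮ) z))
            Filter.atTop (nhds (⨅ n, Sn Ω Ao n (Submodule.orthogonalProjectionOnto ((ℂ ∙ Ω)ᗮ) z))) :=
          (hSnt _).comp hφ.tendsto_atTop
        have h4 := (Complex.continuous_ofReal.tendsto _).comp h3
        refine h4.congr fun k => ?_
        exact (Xop_inner_self Ω A ω Ao hΩ heig hAo (φ k) z).symm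
      exact tendsto_nhds_unique h1 h2
    -- X is a fixed point
    have hfix : (∑ j, ContinuousLinearMap.adjoint (A j) ∘L X ∘L A j) = X := by
      have hforms : ∀ z : H,
          ⟪z, (∑ j, ContinuousLinearMap.adjoint (A j) ∘L X ∘L A j) z⟫ = ⟪z, X z⟫ := by
        intro z
        have hZc : Continuous fun T : H →L[ℂ] H =>
            ∑ j, ContinuousLinearMap.adjoint (A j) ∘L T ∘L A j := by
          refine continuous_finset_sum _ fun j _ => ?_
          exact continuous_const.mul (continuous_id.mul continuous_const)
        have hcont : Continuous fun T : H →L[ℂ] H =>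
            ⟪z, (∑ j, ContinuousLinearMap.adjoint (A j) ∘L T ∘L A j) z⟫ :=
          continuous_const.inner
            (((ContinuousLinearMap.apply ℂ H z).continuous).comp hZc)
        have h1 : Filter.Tendsto
            (fun k => ⟪z, (∑ j, ContinuousLinearMap.adjoint (A j) ∘L Xop Ω A (φ k) ∘L A j) z⟫)
            Filter.atTop
            (nhds ⟪z, (∑ j, ContinuousLinearMap.adjoint (A j) ∘L X ∘L A j) z⟫) :=
          (hcont.tendsto X).comp hconv
        have h2 : Filter.Tendsto
            (fun k => ⟪z, (∑ j, ContinuousLinearMap.adjoint (A j) ∘L Xop Ω A (φ k) ∘L A j) z⟫)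
            Filter.atTop
            (nhds ((⨅ n, Sn Ω Ao n (Submodule.orthogonalProjectionOnto ((ℂ ∙ Ω)ᗮ) z) : ℝ) : ℂ)) := by
          have h3 : Filter.Tendsto (fun k => φ k + 1) Filter.atTop Filter.atTop :=
            (Filter.tendsto_add_atTop_nat 1).comp hφ.tendsto_atTop
          have h4 : Filter.Tendsto
              (fun k => Sn Ω Ao (φ k + 1) (Submodule.orthogonalProjectionOnto ((ℂ ∙ Ω)ᗮ) z))
              Filter.atTop
              (nhds (⨅ n, Sn Ω Ao n (Submodule.orthogonalProjectionOnto ((ℂ ∙ Ω)ᗮ) z))) :=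
            (hSnt _).comp h3
          have h5 := (Complex.continuous_ofReal.tendsto _).comp h4
          refine h5.congr fun k => ?_
          rw [Xop_succ Ω A hunital (φ k)]
          exact (Xop_inner_self Ω A ω Ao hΩ heig hAo (φ k + 1) z).symm
        rw [hXz z]
        exact tendsto_nhds_unique h1 h2
      have hz : ∀ z : H,
          ⟪((∑ j, ContinuousLinearMap.adjoint (A j) ∘L X ∘L A j) - X) z, z⟫ = 0 := by
        intro z
        rw [ContinuousLinearMap.sub_apply, inner_sub_left,
          ← inner_conj_symm ((∑ j, ContinuousLinearMap.adjoint (A j) ∘L X ∘L A j) z) z,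
          ← inner_conj_symm (X z) z, hforms z, sub_self]
      have h0 : (((∑ j, ContinuousLinearMap.adjoint (A j) ∘L X ∘L A j) - X : H →L[ℂ] H)
          : H →ₗ[ℂ] H) = 0 := inner_map_self_eq_zero _ |>.mp fun z => hz z
      have h0' : ((∑ j, ContinuousLinearMap.adjoint (A j) ∘L X ∘L A j) - X : H →L[ℂ] H)
          = 0 := by
        ext z
        have := LinearMap.congr_fun h0 z
        simpa using this
      exact sub_eq_zero.mp h0'
    obtain ⟨c, hc⟩ := herg X hfix
    have hPΩ : Submodule.orthogonalProjectionOnto ((ℂ ∙ Ω)ᗮ) Ω = 0 :=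
      Submodule.orthogonalProjectionOnto_orthogonalComplement_singleton_eq_zero Ω
    have hSn0 : ∀ n : ℕ, Sn Ω Ao n (0 : ↥((ℂ ∙ Ω)ᗮ)) = 0 := fun n => by
      simp [Sn]
    have hΩX : ⟪Ω, X Ω⟫ = 0 := by
      rw [hXz Ω, hPΩ]
      simp [hSn0, ciInf_const]
    have hc0 : c = 0 := by
      rw [hc] at hΩX
      rw [ContinuousLinearMap.smul_apply, ContinuousLinearMap.one_apply,
        inner_smul_right, hΩΩ, mul_one] at hΩX
      exact hΩX
    have hiInf : (⨅ n, Sn Ω Ao n ξ) = 0 := by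
      have h1 := hXz (ξ : H)
      rw [hc, hc0, zero_smul] at h1
      rw [Submodule.orthogonalProjectionOnto_mem_subspace_eq_self ξ] at h1
      have h2 : ((⨅ n, Sn Ω Ao n ξ : ℝ) : ℂ) = 0 := by
        rw [← h1]; simp
      exact_mod_cast h2
    exact hiInf ▸ hSnt ξ
  · -- stable ⇒ ergodic
    intro hstab X hX
    refine ⟨⟪Ω, X Ω⟫, ?_⟩
    set Y := X - ⟪Ω, X Ω⟫ • (1 : H →L[ℂ] H) with hY
    have hYfix : ∑ j, ContinuousLinearMap.adjoint (A j) ∘L Y ∘L A j = Y := by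
      have expand : ∀ j : Fin d,
          ContinuousLinearMap.adjoint (A j) ∘L Y ∘L A j
            = ContinuousLinearMap.adjoint (A j) ∘L X ∘L A j
              - ⟪Ω, X Ω⟫ • (ContinuousLinearMap.adjoint (A j) ∘L A j) := by
        intro j; ext z
        simp [hY, ContinuousLinearMap.comp_apply, ContinuousLinearMap.sub_apply,
          ContinuousLinearMap.smul_apply, ContinuousLinearMap.one_apply, map_sub, map_smul]
      rw [Finset.sum_congr rfl fun j _ => expand j, Finset.sum_sub_distrib, hX,
        ← Finset.smul_sum, hunital]
    have hYΩ : ⟪Ω, Y Ω⟫ = 0 := by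
      rw [hY]
      rw [ContinuousLinearMap.sub_apply, ContinuousLinearMap.smul_apply,
        ContinuousLinearMap.one_apply, inner_sub_right, inner_smul_right, hΩΩ, mul_one,
        sub_self]
    have key : ∀ x y : H, ⟪x, Y y⟫ = 0 := by
      intro x y
      have hrepr : ∀ n : ℕ,
          ⟪x, Y y⟫ = ∑ α : Fin n → Fin d, ⟪wrd A α x, Y (wrd A α y)⟫ := by
        intro n
        conv_lhs => rw [← Fop_fixed A Y hYfix n]
        rw [ContinuousLinearMap.sum_apply, inner_sum]
        exact Finset.sum_congr rfl fun α _ => by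
          rw [ContinuousLinearMap.comp_apply, ContinuousLinearMap.comp_apply,
            ContinuousLinearMap.adjoint_inner_right]
      have hbound : ∀ n : ℕ, ‖⟪x, Y y⟫‖
          ≤ ‖Y‖ * ‖x‖ * Real.sqrt (Sn Ω Ao n (Submodule.orthogonalProjectionOnto ((ℂ ∙ Ω)ᗮ) y))
            + ‖Y‖ * ‖y‖ * Real.sqrt (Sn Ω Ao n (Submodule.orthogonalProjectionOnto ((ℂ ∙ Ω)ᗮ) x))
            + ‖Y‖ * (Real.sqrt (Sn Ω Ao n (Submodule.orthogonalProjectionOnto ((ℂ ∙ Ω)ᗮ) x))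
                * Real.sqrt (Sn Ω Ao n (Submodule.orthogonalProjectionOnto ((ℂ ∙ Ω)ᗮ) y))) := fun n => by
        rw [hrepr n]
        exact bound_aux Ω A ω Ao hunital hΩ heig hAo Y hYΩ n x y
      have hsx : Filter.Tendsto
          (fun n => Real.sqrt (Sn Ω Ao n (Submodule.orthogonalProjectionOnto ((ℂ ∙ Ω)ᗮ) x)))
          Filter.atTop (nhds 0) := by
        have h := (Real.continuous_sqrt.tendsto 0).comp
          (hstab (Submodule.orthogonalProjectionOnto ((ℂ ∙ Ω)ᗮ) x))
        simp only [Real.sqrt_zero] at h; exact h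
      have hsy : Filter.Tendsto
          (fun n => Real.sqrt (Sn Ω Ao n (Submodule.orthogonalProjectionOnto ((ℂ ∙ Ω)ᗮ) y)))
          Filter.atTop (nhds 0) := by
        have h := (Real.continuous_sqrt.tendsto 0).comp
          (hstab (Submodule.orthogonalProjectionOnto ((ℂ ∙ Ω)ᗮ) y))
        simp only [Real.sqrt_zero] at h; exact h
      have h0 : Filter.Tendsto (fun n =>
          ‖Y‖ * ‖x‖ * Real.sqrt (Sn Ω Ao n (Submodule.orthogonalProjectionOnto ((ℂ ∙ Ω)ᗮ) y))
            + ‖Y‖ * ‖y‖ * Real.sqrt (Sn Ω Ao n (Submodule.orthogonalProjectionOnto ((ℂ ∙ Ω)ᗮ) x))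
            + ‖Y‖ * (Real.sqrt (Sn Ω Ao n (Submodule.orthogonalProjectionOnto ((ℂ ∙ Ω)ᗮ) x))
                * Real.sqrt (Sn Ω Ao n (Submodule.orthogonalProjectionOnto ((ℂ ∙ Ω)ᗮ) y))))
          Filter.atTop (nhds 0) := by
        have h1 := ((hsy.const_mul (‖Y‖ * ‖x‖)).add (hsx.const_mul (‖Y‖ * ‖y‖))).add
          ((hsx.mul hsy).const_mul ‖Y‖)
        simpa using h1
      have hle : ‖⟪x, Y y⟫‖ ≤ 0 :=
        le_of_tendsto_of_tendsto' tendsto_const_nhds h0 hbound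
      exact norm_le_zero_iff.mp hle
    have hY0 : Y = 0 := by
      ext y
      have h := key (Y y) y
      rw [ContinuousLinearMap.zero_apply]
      exact inner_self_eq_zero.mp h
    rw [← sub_eq_zero]
    exact hY0
end
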